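/- The partial transpose ρ₅₅^{T_B} of ρ₅₅ is positive semidefinite. -/

import Mathlib

open Matrix ComplexOrder

noncomputable def M55 : Matrix (Fin 9) (Fin 9) ℂ :=
  !![0, 0, 0, 0, 0, 0, 0, 0, 0;
     0, 2, -1, 0, 0, 0, 0, 0, 1;
     0, -1, 1, 0, 0, 0, 0, 0, -1;
     0, 0, 0, 3, 0, -1, -1, 0, 0;
     0, 0, 0, 0, 0, 0, 0, 0, 0;
     0, 0, 0, -1, 0, 1, 1, 0, 0;
     0, 0, 0, -1, 0, 1, 1, 0, 0;
     0, 0, 0, 0, 0, 0, 0, 2, -2;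
     0, 1, -1, 0, 0, 0, 0, -2, 3]

/-- The index map `(i, j) ↦ 3 i + j` from `Fin 3 × Fin 3` to `Fin 9`. -/
def idx (p : Fin 3 × Fin 3) : Fin 9 :=
  ⟨3 * p.1.val + p.2.val, by have h1 := p.1.isLt; have h2 := p.2.isLt; omega⟩

/-- The state `ρ₅₅`, viewed as an operator on `ℂ³ ⊗ ℂ³`. -/
noncomputable def rho55 : Matrix (Fin 3 × Fin 3) (Fin 3 × Fin 3) ℂ :=
  fun p q => (1 / 13 : ℂ) * M55 (idx p) (idx q)

/-- The partial transpose on the second factor: `(ρ^{T_B})_{(i,j),(k,l)} = ρ_{(i,l),(k,j)}`. -/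
noncomputable def ptrans (ρ : Matrix (Fin 3 × Fin 3) (Fin 3 × Fin 3) ℂ) :
    Matrix (Fin 3 × Fin 3) (Fin 3 × Fin 3) ℂ :=
  fun p q => ρ (p.1, q.2) (q.1, p.2)

noncomputable def Cmat : Matrix (Fin 5) (Fin 9) ℂ :=
  !![0, 2, -1, 0, 0, 0, 0, 0, 0;
     0, 0, 1, 0, 0, 0, 0, 2, -2;
     0, 0, 0, 3, 0, -1, -1, 0, 1;
     0, 0, 0, 0, 0, 2, -1, 0, 1;
     0, 0, 0, 0, 0, 0, 1, 0, 1]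

noncomputable def dvec : Fin 5 → ℂ := ![1/26, 1/26, 1/39, 1/78, 1/26]

noncomputable def Nmat : Matrix (Fin 9) (Fin 9) ℂ := Cmatᴴ * Matrix.diagonal dvec * Cmat

lemma Nmat_posSemidef : Nmat.PosSemidef := by
  apply Matrix.PosSemidef.conjTranspose_mul_mul_same (m := Fin 9)
    (A := Matrix.diagonal dvec) ?_ Cmat
  refine Matrix.posSemidef_diagonal_iff.mpr fun i => ?_
  fin_cases i <;> norm_num [dvec, Complex.le_def]

set_option maxHeartbeats 2000000 in
lemma ptrans_eq : ptrans rho55 = Nmat.submatrix idx idx := by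
  ext ⟨a, b⟩ ⟨c, e⟩
  fin_cases a <;> fin_cases b <;> fin_cases c <;> fin_cases e <;>
    norm_num [ptrans, rho55, Nmat, Cmat, dvec, M55, idx, Matrix.mul_apply,
      Matrix.submatrix_apply, Matrix.conjTranspose_apply, Matrix.mul_diagonal,
      Matrix.diagonal_apply, Matrix.vecHead, Matrix.vecTail, Matrix.cons_val',
      Matrix.cons_val_zero, Matrix.cons_val_one, Matrix.head_cons, Matrix.head_fin_const,
      Matrix.empty_val', Matrix.cons_val_fin_one, Function.comp, map_ofNat, Complex.conj_ofNat,
      Fin.sum_univ_five, Fin.isValue, Matrix.cons_val_two, Matrix.cons_val_three, Matrix.cons_val_four]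

/-- The partial transpose of `ρ₅₅` is positive semidefinite. -/
theorem rho55_ptrans_posSemidef : (ptrans rho55).PosSemidef := by
  rw [ptrans_eq]
  exact Nmat_posSemidef.submatrix idx
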